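/- Let f : ℝⁿ → ℝⁿ be locally Lipschitz, and suppose there exist a locally Lipschitz V : ℝⁿ → ℝ, class-K∞ functions α̲, ᾱ, a class-K function α, and a continuous h : ℝⁿ → ℝᵖ such that α̲(‖x‖) ≤ V(x) ≤ ᾱ(‖x‖) for all x, and the upper right Dini derivative of V along solutions satisfies D⁺V ≤ −α(‖h(x)‖) for all x ≠ 0. If every solution with h(x(t)) = 0 for all t ≥ 0 converges to the origin (zero-state detectability), then the origin of ẋ = f(x) is globally asymptotically stable. -/

import Mathlib

open Filter
open Set Topology

/-- Class-K functions: continuous, strictly increasing, vanishing at 0. -/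
def IsClassK (α : ℝ → ℝ) : Prop :=
  Continuous α ∧ StrictMonoOn α (Set.Ici 0) ∧ α 0 = 0

/-- Class-K∞ functions. -/
def IsClassKInf (α : ℝ → ℝ) : Prop :=
  IsClassK α ∧ Tendsto α atTop atTop

/-- Upper right-hand Dini derivative of a real function. -/
noncomputable def diniDeriv (φ : ℝ → ℝ) (t : ℝ) : ℝ :=
  limsup (fun h : ℝ => (φ (t + h) - φ t) / h) (nhdsWithin 0 (Set.Ioi 0))

/-- A (forward-complete) solution of `ẋ = f(x)`. -/
def IsSolution {n : ℕ} (f : (Fin n → ℝ) → (Fin n → ℝ)) (φ : ℝ → Fin n → ℝ) : Prop :=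
  ∀ t : ℝ, 0 ≤ t → HasDerivAt φ (f (φ t)) t

lemma freq_slope {g : ℝ → ℝ} {x w C : ℝ}
    (hb : ∀ᶠ h in nhdsWithin (0:ℝ) (Set.Ioi 0), (g (x + h) - g x) / h ≤ C)
    (hd : diniDeriv g x ≤ w) :
    ∀ r, w < r → ∃ᶠ z in nhdsWithin x (Set.Ioi x), slope g x z < r := by
  intro r hr
  by_contra hcon
  rw [Filter.not_frequently] at hcon
  have hmap : Filter.map (fun h : ℝ => x + h) (nhdsWithin (0:ℝ) (Set.Ioi 0))
      = nhdsWithin x (Set.Ioi x) := by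
    have := (Homeomorph.addLeft x).isEmbedding.map_nhdsWithin_eq (Set.Ioi 0) (0 : ℝ)
    simpa [Homeomorph.addLeft] using this
  rw [← hmap, Filter.eventually_map] at hcon
  have hev : ∀ᶠ h in nhdsWithin (0:ℝ) (Set.Ioi 0), r ≤ (g (x + h) - g x) / h := by
    filter_upwards [hcon, self_mem_nhdsWithin] with h h1 h2
    rw [not_lt] at h1
    have hpos : (0:ℝ) < h := h2
    have : slope g x (x + h) = (g (x + h) - g x) / h := by
      rw [slope_def_field]; ring_nf
    linarith [this ▸ h1]
  have hbdd : IsBoundedUnder (· ≤ ·) (nhdsWithin (0:ℝ) (Set.Ioi 0))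
      (fun h : ℝ => (g (x + h) - g x) / h) := ⟨C, hb⟩
  have := le_limsup_of_frequently_le hev.frequently hbdd
  have : r ≤ w := le_trans this hd
  linarith

lemma dini_le_integral {g w : ℝ → ℝ} {a b : ℝ}
    (hab : a ≤ b) (hg : ContinuousOn g (Set.Icc a b)) (hw : Continuous w)
    (hd : ∀ x ∈ Set.Ico a b, diniDeriv g x ≤ w x)
    (hq : ∀ x ∈ Set.Ico a b, ∃ C, ∀ᶠ h in nhdsWithin (0:ℝ) (Set.Ioi 0),
      (g (x + h) - g x) / h ≤ C) :
    g b ≤ g a + ∫ s in a..b, w s := by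
  have hW : ∀ x : ℝ, HasDerivAt (fun u => ∫ s in a..u, w s) (w x) x := fun x =>
    intervalIntegral.integral_hasDerivAt_right (hw.intervalIntegrable a x)
      (hw.stronglyMeasurableAtFilter _ _) hw.continuousAt
  have key := image_le_of_liminf_slope_right_le_deriv_boundary (f := g) (a := a) (b := b) hg
    (B := fun x => g a + ∫ s in a..x, w s) (B' := w)
    (by simp)
    (Continuous.continuousOn (continuous_const.add
      (continuous_iff_continuousAt.mpr fun x => (hW x).continuousAt)))
    (fun x _ => ((hW x).const_add (g a)).hasDerivWithinAt)
    (fun x hx r hr => by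
      obtain ⟨C, hC⟩ := hq x hx
      exact freq_slope hC (hd x hx) r hr)
  exact key (Set.right_mem_Icc.mpr hab)

lemma dini_antitone {g : ℝ → ℝ}
    (hg : ContinuousOn g (Set.Ici 0))
    (hnn : ∀ x : ℝ, 0 ≤ x → 0 ≤ g x)
    (hd : ∀ x : ℝ, 0 ≤ x → 0 < g x → diniDeriv g x ≤ 0)
    (hq : ∀ x : ℝ, 0 ≤ x → ∃ C, ∀ᶠ h in nhdsWithin (0:ℝ) (Set.Ioi 0),
      (g (x + h) - g x) / h ≤ C) :
    ∀ s t : ℝ, 0 ≤ s → s ≤ t → g t ≤ g s := by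
  intro s t hs hst
  by_contra hcon
  push_neg at hcon
  set c : ℝ := (g s + g t) / 2 with hc
  have hsc : g s < c := by simp only [hc]; linarith
  have hct : c < g t := by simp only [hc]; linarith
  have hcpos : 0 < c := lt_of_le_of_lt (hnn s hs) hsc
  set S : Set ℝ := {r | r ∈ Set.Icc s t ∧ g r ≤ c} with hS
  have hSne : S.Nonempty := ⟨s, ⟨le_refl s, hst⟩, hsc.le⟩
  have hSbdd : BddAbove S := ⟨t, fun r hr => hr.1.2⟩
  have hSclosed : IsClosed S := by
    have : S = Set.Icc s t ∩ g ⁻¹' Set.Iic c := by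
      ext r; simp [hS, Set.mem_Icc, and_comm]
    rw [this]
    exact ContinuousOn.preimage_isClosed_of_isClosed
      (hg.mono (fun r hr => le_trans hs hr.1)) isClosed_Icc isClosed_Iic
  set u := sSup S with hu
  have huS : u ∈ S := hSclosed.csSup_mem hSne hSbdd
  have hus : s ≤ u := huS.1.1
  have hu0 : 0 ≤ u := le_trans hs hus
  have hut : u < t := lt_of_le_of_ne huS.1.2 (fun h => by
    rw [h] at huS; exact absurd huS.2 (not_le.mpr hct))
  have hIoc : ∀ r ∈ Set.Ioc u t, c < g r := by
    intro r hr
    by_contra hgr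
    push_neg at hgr
    have : r ∈ S := ⟨⟨le_trans hus hr.1.le, hr.2⟩, hgr⟩
    exact absurd (le_csSup hSbdd this) (not_le.mpr hr.1)
  have hgu : g u = c := by
    rcases lt_or_eq_of_le huS.2 with hlt | heq
    · exfalso
      have hcw : ContinuousWithinAt g (Set.Ici u) u :=
        (hg.mono (fun r hr => le_trans hu0 hr)).continuousWithinAt (Set.mem_Ici.mpr le_rfl)
      have h1 : ∀ᶠ r in nhdsWithin u (Set.Ioi u), g r < c :=
        (hcw.eventually_lt continuousWithinAt_const hlt).filter_mono
          (nhdsWithin_mono u Set.Ioi_subset_Ici_self)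
      have h2 : Set.Ioc u t ∈ nhdsWithin u (Set.Ioi u) :=
        Ioc_mem_nhdsGT hut
      obtain ⟨r, hr1, hr2⟩ := (h1.and (eventually_of_mem h2 (fun r hr => hr))).exists
      exact absurd (hIoc r hr2) (not_lt.mpr hr1.le)
    · exact heq
  have hpos : ∀ x ∈ Set.Ico u t, 0 < g x := by
    intro x hx
    rcases eq_or_lt_of_le hx.1 with h | h
    · rw [← h, hgu]; exact hcpos
    · exact lt_trans hcpos (hIoc x ⟨h, hx.2.le⟩)
  have hkey := dini_le_integral (g := g) (w := fun _ => (0:ℝ)) hut.le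
    (hg.mono (fun r hr => le_trans hu0 hr.1)) continuous_const
    (fun x hx => hd x (le_trans hu0 hx.1) (hpos x hx))
    (fun x hx => hq x (le_trans hu0 hx.1))
  simp only [intervalIntegral.integral_const, smul_zero, add_zero] at hkey
  rw [hgu] at hkey
  exact absurd hkey (not_le.mpr hct)

lemma quot_bound {E : Type*} [NormedAddCommGroup E] [NormedSpace ℝ E]
    {V : E → ℝ} (hV : LocallyLipschitz V) {φ : ℝ → E} {d : E} {x : ℝ}
    (hφ : HasDerivAt φ d x) :
    ∃ C, ∀ᶠ h in nhdsWithin (0:ℝ) (Set.Ioi 0),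
      ((fun τ => V (φ τ)) (x + h) - (fun τ => V (φ τ)) x) / h ≤ C := by
  obtain ⟨K, t, ht, hK⟩ := hV (φ x)
  obtain ⟨cc, hcc⟩ := hφ.isBigO_sub.bound
  have htend : Filter.Tendsto (fun h : ℝ => x + h) (nhdsWithin (0:ℝ) (Set.Ioi 0)) (nhds x) := by
    have : Filter.Tendsto (fun h : ℝ => x + h) (nhds (0:ℝ)) (nhds x) := by
      simpa using (continuous_add_left x).tendsto (0:ℝ)
    exact this.mono_left nhdsWithin_le_nhds
  have hmem : ∀ᶠ h in nhdsWithin (0:ℝ) (Set.Ioi 0), φ (x + h) ∈ t :=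
    htend (hφ.continuousAt ht)
  refine ⟨(K : ℝ) * cc, ?_⟩
  filter_upwards [hmem, htend hcc, self_mem_nhdsWithin] with h h1 h2 h3
  have hpos : (0:ℝ) < h := h3
  have hd : dist (V (φ (x + h))) (V (φ x)) ≤ (K : ℝ) * dist (φ (x + h)) (φ x) :=
    hK.dist_le_mul _ h1 _ (mem_of_mem_nhds ht)
  have h2' : ‖φ (x + h) - φ x‖ ≤ cc * h := by
    have := h2
    calc ‖φ (x + h) - φ x‖ ≤ cc * ‖x + h - x‖ := this
    _ = cc * h := by rw [show x + h - x = h by ring, Real.norm_eq_abs, abs_of_pos hpos]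
  have : V (φ (x + h)) - V (φ x) ≤ (K : ℝ) * (cc * h) := by
    calc V (φ (x + h)) - V (φ x) ≤ dist (V (φ (x + h))) (V (φ x)) := by
          rw [Real.dist_eq]; exact le_abs_self _
    _ ≤ (K : ℝ) * dist (φ (x + h)) (φ x) := hd
    _ ≤ (K : ℝ) * (cc * h) := by
          rw [dist_eq_norm]; exact mul_le_mul_of_nonneg_left h2' K.2
  rw [div_le_iff₀ hpos]
  calc V (φ (x + h)) - V (φ x) ≤ (K : ℝ) * (cc * h) := this
  _ = (K : ℝ) * cc * h := by ring

lemma tendsto_integral_comp {E Y : Type*} [NormedAddCommGroup E] [NormedSpace ℝ E]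
    [ProperSpace E] [NormedAddCommGroup Y] [NormedSpace ℝ Y]
    {U : Filter ℕ} {φk : ℕ → ℝ → E} {ψ : ℝ → E} {R : ℝ} {u : ℝ}
    {F : E → Y} (hF : Continuous F)
    (hmem : ∀ᶠ k in U, ∀ t ∈ Set.uIcc 0 u, ‖φk k t‖ ≤ R)
    (hψmem : ∀ t ∈ Set.uIcc 0 u, ‖ψ t‖ ≤ R)
    (hψc : Continuous ψ)
    (hφkc : ∀ᶠ k in U, ContinuousOn (φk k) (Set.uIcc 0 u))
    (happrox : ∀ ε > 0, ∀ᶠ k in U, ∀ t ∈ Set.uIcc 0 u, ‖φk k t - ψ t‖ ≤ ε) :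
    Tendsto (fun k => ∫ s in (0:ℝ)..u, F (φk k s)) U (𝓝 (∫ s in (0:ℝ)..u, F (ψ s))) := by
  rw [Metric.tendsto_nhds]
  intro ε hε
  have hUC : UniformContinuousOn F (Metric.closedBall 0 R) :=
    (isCompact_closedBall (0:E) R).uniformContinuousOn_of_continuous hF.continuousOn
  set ε' : ℝ := ε / (2 * (|u| + 1)) with hε'
  have hε'pos : 0 < ε' := by positivity
  obtain ⟨δ, hδpos, hδ⟩ := Metric.uniformContinuousOn_iff.mp hUC ε' hε'pos
  filter_upwards [hmem, hφkc, happrox (δ/2) (by positivity)] with k hk1 hk2 hk3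
  have hbnd : ∀ s ∈ Set.uIoc 0 u, ‖F (φk k s) - F (ψ s)‖ ≤ ε' := by
    intro s hs
    have hs' : s ∈ Set.uIcc 0 u := Set.uIoc_subset_uIcc hs
    have h1 : φk k s ∈ Metric.closedBall (0:E) R := by
      simpa [Metric.mem_closedBall, dist_eq_norm] using hk1 s hs'
    have h2 : ψ s ∈ Metric.closedBall (0:E) R := by
      simpa [Metric.mem_closedBall, dist_eq_norm] using hψmem s hs'
    have h3 : dist (φk k s) (ψ s) < δ := by
      rw [dist_eq_norm]; exact lt_of_le_of_lt (hk3 s hs') (by linarith)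
    have := hδ _ h1 _ h2 h3
    rw [dist_eq_norm] at this
    exact this.le
  have hint1 : IntervalIntegrable (fun s => F (φk k s)) MeasureTheory.volume 0 u :=
    (hF.comp_continuousOn hk2).intervalIntegrable
  have hint2 : IntervalIntegrable (fun s => F (ψ s)) MeasureTheory.volume 0 u :=
    (hF.comp hψc).intervalIntegrable 0 u
  rw [dist_eq_norm, ← intervalIntegral.integral_sub hint1 hint2]
  calc ‖∫ s in (0:ℝ)..u, (F (φk k s) - F (ψ s))‖ ≤ ε' * |u - 0| :=
        intervalIntegral.norm_integral_le_of_norm_le_const hbnd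
  _ ≤ ε' * (|u| + 1) := by
        rw [sub_zero]
        exact mul_le_mul_of_nonneg_left (by linarith [abs_nonneg u]) hε'pos.le
  _ < ε := by
        rw [hε']
        rw [div_mul_eq_mul_div, div_lt_iff₀ (by positivity)]
        nlinarith [abs_nonneg u]

theorem stmt_16 {n p : ℕ} (f : (Fin n → ℝ) → (Fin n → ℝ)) (hf : LocallyLipschitz f)
    (V : (Fin n → ℝ) → ℝ) (hV : LocallyLipschitz V)
    (αl αu α : ℝ → ℝ) (hαl : IsClassKInf αl) (hαu : IsClassKInf αu) (hα : IsClassK α)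
    (h : (Fin n → ℝ) → (Fin p → ℝ)) (hh : Continuous h)
    (hbound : ∀ x : Fin n → ℝ, αl ‖x‖ ≤ V x ∧ V x ≤ αu ‖x‖)
    (hdini : ∀ φ : ℝ → Fin n → ℝ, IsSolution f φ →
      ∀ t ≥ (0 : ℝ), φ t ≠ 0 → diniDeriv (fun τ => V (φ τ)) t ≤ -α ‖h (φ t)‖)
    (hzsd : ∀ φ : ℝ → Fin n → ℝ, IsSolution f φ →
      (∀ t ≥ (0 : ℝ), h (φ t) = 0) → Tendsto φ atTop (nhds 0)) :
    -- Lyapunov stability of the origin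
    (∀ ε > (0 : ℝ), ∃ δ > (0 : ℝ), ∀ φ : ℝ → Fin n → ℝ, IsSolution f φ →
      ‖φ 0‖ < δ → ∀ t ≥ (0 : ℝ), ‖φ t‖ < ε) ∧
    -- global attractivity of the origin
    (∀ φ : ℝ → Fin n → ℝ, IsSolution f φ → Tendsto φ atTop (nhds 0)) := by
  obtain ⟨⟨hαlc, hαlm, hαl0⟩, hαlinf⟩ := hαl
  obtain ⟨⟨hαuc, hαum, hαu0⟩, -⟩ := hαu
  obtain ⟨hαc, hαm, hα0⟩ := hα
  have hαlnn : ∀ r : ℝ, 0 ≤ r → 0 ≤ αl r := by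
    intro r hr
    rw [← hαl0]
    exact hαlm.monotoneOn (Set.mem_Ici.mpr le_rfl) (Set.mem_Ici.mpr hr) hr
  have hαnn : ∀ r : ℝ, 0 ≤ r → 0 ≤ α r := by
    intro r hr
    rw [← hα0]
    exact hαm.monotoneOn (Set.mem_Ici.mpr le_rfl) (Set.mem_Ici.mpr hr) hr
  have hV0 : V 0 = 0 := by
    have h1 := (hbound 0).1
    have h2 := (hbound 0).2
    simp only [norm_zero, hαl0, hαu0] at h1 h2
    linarith
  have hVnn : ∀ x : Fin n → ℝ, 0 ≤ V x := fun x =>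
    le_trans (hαlnn _ (norm_nonneg _)) (hbound x).1
  have hαlstrict : ∀ a b : ℝ, 0 ≤ a → 0 ≤ b → αl a < αl b → a < b := by
    intro a b ha hb hab
    by_contra hcon
    push_neg at hcon
    exact absurd (hαlm.monotoneOn (Set.mem_Ici.mpr hb)
      (Set.mem_Ici.mpr ha) hcon : αl b ≤ αl a) (not_le.mpr hab)
  have ganti : ∀ φ : ℝ → Fin n → ℝ, IsSolution f φ →
      ∀ s t : ℝ, 0 ≤ s → s ≤ t → V (φ t) ≤ V (φ s) := by
    intro φ hsol
    apply dini_antitone (g := fun t => V (φ t))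
    · exact fun t ht =>
        (hV.continuous.continuousAt.comp ((hsol t ht).continuousAt)).continuousWithinAt
    · exact fun x _ => hVnn _
    · intro x hx hpos
      have hne : φ x ≠ 0 := by
        intro he
        rw [he, hV0] at hpos
        exact lt_irrefl 0 hpos
      refine le_trans (hdini φ hsol x hx hne) ?_
      exact neg_nonpos.mpr (hαnn _ (norm_nonneg _))
    · exact fun x hx => quot_bound hV (hsol x hx)
  constructor
  · intro ε hε
    have hαlε : 0 < αl ε := by
      rw [← hαl0]
      exact hαlm (Set.mem_Ici.mpr le_rfl) (Set.mem_Ici.mpr hε.le) hε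
    have hcont : ∀ᶠ y in 𝓝 (0:ℝ), αu y < αl ε := by
      have h1 : ContinuousAt αu 0 := hαuc.continuousAt
      exact h1.eventually_lt continuousAt_const (by rw [hαu0]; exact hαlε)
    obtain ⟨δ, hδpos, hδ⟩ := Metric.eventually_nhds_iff.mp hcont
    refine ⟨δ, hδpos, ?_⟩
    intro φ hsol hφ0 t ht
    have h1 : V (φ t) ≤ V (φ 0) := ganti φ hsol 0 t le_rfl ht
    have h2 : V (φ 0) ≤ αu ‖φ 0‖ := (hbound (φ 0)).2
    have h3 : αu ‖φ 0‖ < αl ε := hδ (by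
      simpa [Real.dist_eq, abs_of_nonneg (norm_nonneg (φ 0))] using hφ0)
    have h4 := (hbound (φ t)).1
    exact hαlstrict _ _ (norm_nonneg _) hε.le (by linarith)
  · intro φ hsol
    by_cases hzero : ∃ t₀ : ℝ, 0 ≤ t₀ ∧ φ t₀ = 0
    · obtain ⟨t₀, ht₀, hφt₀⟩ := hzero
      have hev : ∀ᶠ t in atTop, φ t = (0 : Fin n → ℝ) := by
        filter_upwards [eventually_ge_atTop t₀] with t ht
        have h1 : V (φ t) ≤ V (φ t₀) := ganti φ hsol t₀ t ht₀ ht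
        rw [hφt₀, hV0] at h1
        have h2 := (hbound (φ t)).1
        have h4 : αl ‖φ t‖ = 0 := le_antisymm (le_trans h2 h1) (hαlnn _ (norm_nonneg _))
        have h5 : ‖φ t‖ = 0 := by
          by_contra hc
          have h6 : 0 < ‖φ t‖ := lt_of_le_of_ne (norm_nonneg _) (Ne.symm hc)
          have h7 : αl 0 < αl ‖φ t‖ :=
            hαlm (Set.mem_Ici.mpr le_rfl) (Set.mem_Ici.mpr (norm_nonneg _)) h6
          rw [hαl0] at h7
          linarith
        exact norm_eq_zero.mp h5
      exact Tendsto.congr' (hev.mono fun t ht => ht.symm) tendsto_const_nhds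
    push_neg at hzero
    have hφcont : ∀ t : ℝ, 0 ≤ t → ContinuousAt φ t := fun t ht => (hsol t ht).continuousAt
    set g : ℝ → ℝ := fun t => V (φ t) with hgdef
    have hGanti : Antitone (fun t => g (max t 0)) := fun s t hst =>
      ganti φ hsol (max s 0) (max t 0) (le_max_right s 0) (max_le_max hst le_rfl)
    have hGbdd : BddBelow (Set.range (fun t => g (max t 0))) := by
      refine ⟨0, ?_⟩
      rintro y ⟨t, rfl⟩
      exact hVnn _
    set c : ℝ := ⨅ t, g (max t 0) with hcdef
    have hGlim : Tendsto (fun t => g (max t 0)) atTop (𝓝 c) := tendsto_atTop_ciInf hGanti hGbdd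
    have hglim : Tendsto g atTop (𝓝 c) := by
      apply hGlim.congr'
      filter_upwards [eventually_ge_atTop (0:ℝ)] with t ht
      rw [max_eq_left ht]
    obtain ⟨R, hR1, hR0⟩ := ((hαlinf.eventually_gt_atTop (g 0)).and
      (eventually_ge_atTop (0:ℝ))).exists
    have hφR : ∀ t : ℝ, 0 ≤ t → ‖φ t‖ ≤ R := by
      intro t ht
      by_contra hcon
      push_neg at hcon
      have h1 : αl R ≤ αl ‖φ t‖ := hαlm.monotoneOn (Set.mem_Ici.mpr hR0)
        (Set.mem_Ici.mpr (norm_nonneg _)) hcon.le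
      have h2 := (hbound (φ t)).1
      have h3 : g t ≤ g 0 := ganti φ hsol 0 t le_rfl ht
      have h4 : g t = V (φ t) := rfl
      linarith
    obtain ⟨M₀, hM₀⟩ := (isCompact_closedBall (0 : Fin n → ℝ) R).exists_bound_of_continuousOn
      hf.continuous.continuousOn
    set M := max M₀ 0 with hMdef
    have hM0 : (0:ℝ) ≤ M := le_max_right _ _
    have hfM : ∀ x : Fin n → ℝ, ‖x‖ ≤ R → ‖f x‖ ≤ M := fun x hx =>
      le_trans (hM₀ x (by simpa [Metric.mem_closedBall, dist_eq_norm] using hx)) (le_max_left _ _)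
    have hφLip : ∀ s ∈ Set.Ici (0:ℝ), ∀ t ∈ Set.Ici (0:ℝ), ‖φ t - φ s‖ ≤ M * ‖t - s‖ := by
      intro s hs t ht
      exact (convex_Ici (0:ℝ)).norm_image_sub_le_of_norm_hasDerivWithin_le
        (fun x hx => (hsol x hx).hasDerivWithinAt)
        (fun x hx => hfM _ (hφR x hx)) hs ht
    obtain ⟨U, hU⟩ := Filter.exists_ultrafilter_le (atTop : Filter ℕ)
    have hUev : ∀ {q : ℕ → Prop}, (∀ᶠ k in atTop, q k) → ∀ᶠ k in (U : Filter ℕ), q k :=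
      fun hq => hq.filter_mono hU
    have hUR : ∀ t : ℝ, ∀ᶠ k : ℕ in (U : Filter ℕ), ‖φ ((k:ℝ) + t)‖ ≤ R ∧ (0:ℝ) ≤ (k:ℝ) + t := by
      intro t
      apply hUev
      filter_upwards [(tendsto_natCast_atTop_atTop (R := ℝ)).eventually_ge_atTop (-t)] with k hk
      have h1 : (0:ℝ) ≤ (k:ℝ) + t := by linarith
      exact ⟨hφR _ h1, h1⟩
    have hψex : ∀ t : ℝ, ∃ y : Fin n → ℝ,
        Tendsto (fun k : ℕ => φ ((k:ℝ) + t)) (U : Filter ℕ) (𝓝 y) := by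
      intro t
      have hmem : ∀ᶠ k : ℕ in (U : Filter ℕ),
          φ ((k:ℝ) + t) ∈ Metric.closedBall (0 : Fin n → ℝ) R := by
        filter_upwards [hUR t] with k hk
        simpa [Metric.mem_closedBall, dist_eq_norm] using hk.1
      have hle : ↑(U.map (fun k : ℕ => φ ((k:ℝ) + t))) ≤
          (𝓟 (Metric.closedBall (0 : Fin n → ℝ) R) : Filter (Fin n → ℝ)) := by
        rw [Ultrafilter.coe_map, Filter.le_principal_iff]
        exact Filter.mem_map.mpr hmem
      obtain ⟨y, -, hy⟩ := (isCompact_closedBall (0 : Fin n → ℝ) R).ultrafilter_le_nhds _ hle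
      rw [Ultrafilter.coe_map] at hy
      exact ⟨y, hy⟩
    choose ψ hψlim using hψex
    have hψR : ∀ t : ℝ, ‖ψ t‖ ≤ R := by
      intro t
      exact le_of_tendsto (hψlim t).norm ((hUR t).mono (fun k hk => hk.1))
    have hψLip : ∀ s t : ℝ, ‖ψ t - ψ s‖ ≤ M * ‖t - s‖ := by
      intro s t
      apply le_of_tendsto ((hψlim t).sub (hψlim s)).norm
      filter_upwards [hUR t, hUR s] with k hk1 hk2
      calc ‖φ ((k:ℝ) + t) - φ ((k:ℝ) + s)‖ ≤ M * ‖((k:ℝ) + t) - ((k:ℝ) + s)‖ :=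
            hφLip _ hk2.2 _ hk1.2
      _ = M * ‖t - s‖ := by ring_nf
    have hψcont : Continuous ψ := by
      apply LipschitzWith.continuous (K := Real.toNNReal M)
      apply LipschitzWith.of_dist_le_mul
      intro x y
      rw [dist_eq_norm, dist_eq_norm]
      calc ‖ψ x - ψ y‖ ≤ M * ‖x - y‖ := hψLip y x
      _ = (Real.toNNReal M : ℝ) * ‖x - y‖ := by rw [Real.coe_toNNReal M hM0]
    have key : ∀ T : ℝ, ∀ ε > (0:ℝ), ∀ᶠ k : ℕ in (U : Filter ℕ),
        ∀ t ∈ Set.Icc (-T) T, ‖φ ((k:ℝ) + t) - ψ t‖ ≤ ε := by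
      intro T ε hε
      set δ : ℝ := ε / (3 * (M + 1)) with hδdef
      have hδpos : 0 < δ := by positivity
      have hcover : Set.Icc (-T) T ⊆ ⋃ i ∈ Set.Icc (-T) T, Metric.ball i δ :=
        fun t ht => Set.mem_biUnion ht (Metric.mem_ball_self hδpos)
      obtain ⟨b', hb'sub, hb'fin, hb'cover⟩ :=
        (isCompact_Icc (a := -T) (b := T)).elim_finite_subcover_image
          (fun i _ => Metric.isOpen_ball) hcover
      have hev1 : ∀ᶠ k : ℕ in (U : Filter ℕ), ∀ i ∈ b', ‖φ ((k:ℝ) + i) - ψ i‖ ≤ ε/3 := by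
        rw [eventually_all_finite hb'fin]
        intro i _
        have h2 : Tendsto (fun k : ℕ => ‖φ ((k:ℝ) + i) - ψ i‖) (U : Filter ℕ) (𝓝 0) := by
          simpa using ((hψlim i).sub (tendsto_const_nhds (x := ψ i))).norm
        have h3 := h2.eventually_lt_const (show (0:ℝ) < ε/3 by positivity)
        exact h3.mono fun k hk => hk.le
      have hevT : ∀ᶠ k : ℕ in (U : Filter ℕ), T ≤ (k:ℝ) :=
        hUev ((tendsto_natCast_atTop_atTop (R := ℝ)).eventually_ge_atTop T)
      filter_upwards [hev1, hevT] with k hk1 hk2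
      intro t ht
      obtain ⟨i, hi, hti⟩ := Set.mem_iUnion₂.mp (hb'cover ht)
      have hiIcc : i ∈ Set.Icc (-T) T := hb'sub hi
      have h1 : (0:ℝ) ≤ (k:ℝ) + t := by have := ht.1; linarith
      have h2 : (0:ℝ) ≤ (k:ℝ) + i := by have := hiIcc.1; linarith
      have hd : |t - i| < δ := by
        have := Metric.mem_ball.mp hti
        rwa [Real.dist_eq] at this
      have e1 : ‖φ ((k:ℝ) + t) - φ ((k:ℝ) + i)‖ ≤ M * δ := by
        calc ‖φ ((k:ℝ) + t) - φ ((k:ℝ) + i)‖ ≤ M * ‖((k:ℝ) + t) - ((k:ℝ) + i)‖ :=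
              hφLip _ h2 _ h1
        _ = M * |t - i| := by rw [show ((k:ℝ) + t) - ((k:ℝ) + i) = t - i by ring, Real.norm_eq_abs]
        _ ≤ M * δ := mul_le_mul_of_nonneg_left hd.le hM0
      have e2 : ‖ψ i - ψ t‖ ≤ M * δ := by
        calc ‖ψ i - ψ t‖ ≤ M * ‖i - t‖ := hψLip t i
        _ = M * |t - i| := by rw [Real.norm_eq_abs, abs_sub_comm]
        _ ≤ M * δ := mul_le_mul_of_nonneg_left hd.le hM0
      have e3 : ‖φ ((k:ℝ) + i) - ψ i‖ ≤ ε/3 := hk1 i hi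
      have tri : ‖φ ((k:ℝ) + t) - ψ t‖ ≤ ‖φ ((k:ℝ) + t) - φ ((k:ℝ) + i)‖ +
          ‖φ ((k:ℝ) + i) - ψ i‖ + ‖ψ i - ψ t‖ := by
        have := dist_triangle4 (φ ((k:ℝ) + t)) (φ ((k:ℝ) + i)) (ψ i) (ψ t)
        simpa [dist_eq_norm] using this
      have hMδ : M * δ ≤ ε/3 := by
        rw [hδdef, mul_div_assoc']
        rw [div_le_div_iff₀ (by positivity) (by norm_num)]
        nlinarith
      linarith
    have hφkcont : ∀ (k : ℕ) (u : ℝ), (|u| ≤ (k:ℝ)) →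
        ContinuousOn (fun s => φ ((k:ℝ) + s)) (Set.uIcc 0 u) := by
      intro k u hku
      intro s hs
      have hs0 : (0:ℝ) ≤ (k:ℝ) + s := by
        have h1 : -|u| ≤ s := by
          rcases Set.mem_uIcc.mp hs with hh | hh
          · linarith [hh.1, neg_abs_le u, abs_nonneg u]
          · linarith [hh.1, neg_abs_le u]
        linarith
      exact ((hφcont _ hs0).comp ((continuous_const.add continuous_id).continuousAt)).continuousWithinAt
    have hode : ∀ u : ℝ, ∀ᶠ k : ℕ in (U : Filter ℕ),
        φ ((k:ℝ) + u) = φ ((k:ℝ)) + ∫ s in (0:ℝ)..u, f (φ ((k:ℝ) + s)) := by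
      intro u
      apply hUev
      filter_upwards [(tendsto_natCast_atTop_atTop (R := ℝ)).eventually_ge_atTop |u|] with k hk
      have hderiv : ∀ s ∈ Set.uIcc (0:ℝ) u,
          HasDerivAt (fun τ => φ ((k:ℝ) + τ)) (f (φ ((k:ℝ) + s))) s := by
        intro s hs
        have hs0 : (0:ℝ) ≤ (k:ℝ) + s := by
          have h1 : -|u| ≤ s := by
            rcases Set.mem_uIcc.mp hs with hh | hh
            · linarith [hh.1, neg_abs_le u, abs_nonneg u]
            · linarith [hh.1, neg_abs_le u]
          linarith
        have h1 := hsol ((k:ℝ) + s) hs0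
        have h2 : HasDerivAt (fun τ : ℝ => (k:ℝ) + τ) 1 s := by
          simpa using (hasDerivAt_id s).const_add (k:ℝ)
        have h3 := h1.scomp s h2
        rw [one_smul] at h3
        exact h3
      have hcont : ContinuousOn (fun s => f (φ ((k:ℝ) + s))) (Set.uIcc 0 u) :=
        hf.continuous.comp_continuousOn (hφkcont k u hk)
      have h4 := intervalIntegral.integral_eq_sub_of_hasDerivAt hderiv hcont.intervalIntegrable
      rw [h4]
      simp
    have hψint : ∀ u : ℝ, ψ u = ψ 0 + ∫ s in (0:ℝ)..u, f (ψ s) := by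
      intro u
      have h0 : Tendsto (fun k : ℕ => φ ((k:ℝ))) (U : Filter ℕ) (𝓝 (ψ 0)) := by
        have := hψlim 0
        simpa using this
      have hint : Tendsto (fun k : ℕ => ∫ s in (0:ℝ)..u, f (φ ((k:ℝ) + s))) (U : Filter ℕ)
          (𝓝 (∫ s in (0:ℝ)..u, f (ψ s))) := by
        apply tendsto_integral_comp (R := R) hf.continuous
        · apply hUev
          filter_upwards [(tendsto_natCast_atTop_atTop (R := ℝ)).eventually_ge_atTop |u|]
            with k hk t htu
          have h1 : -|u| ≤ t := by
            rcases Set.mem_uIcc.mp htu with hh | hh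
            · linarith [hh.1, neg_abs_le u, abs_nonneg u]
            · linarith [hh.1, neg_abs_le u]
          exact hφR _ (by linarith)
        · exact fun t _ => hψR t
        · exact hψcont
        · apply hUev
          filter_upwards [(tendsto_natCast_atTop_atTop (R := ℝ)).eventually_ge_atTop |u|]
            with k hk
          exact hφkcont k u hk
        · intro ε hε
          filter_upwards [key (|u| + 1) ε hε] with k hk t ht
          apply hk
          constructor
          · rcases Set.mem_uIcc.mp ht with hh | hh
            · linarith [hh.1, neg_abs_le u, abs_nonneg u]
            · linarith [hh.1, neg_abs_le u]
          · rcases Set.mem_uIcc.mp ht with hh | hh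
            · linarith [hh.2, le_abs_self u, abs_nonneg u]
            · linarith [hh.2, le_abs_self u, abs_nonneg u]
      have hrhs := h0.add hint
      refine tendsto_nhds_unique (hψlim u) (hrhs.congr' ?_)
      filter_upwards [hode u] with k hk
      exact hk.symm
    have hψsol : IsSolution f ψ := by
      intro t _
      have hc2 : Continuous fun s => f (ψ s) := hf.continuous.comp hψcont
      have hFTC : HasDerivAt (fun u => ψ 0 + ∫ s in (0:ℝ)..u, f (ψ s)) (f (ψ t)) t :=
        (intervalIntegral.integral_hasDerivAt_right (hc2.intervalIntegrable 0 t)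
          (hc2.stronglyMeasurableAtFilter _ _) hc2.continuousAt).const_add (ψ 0)
      exact hFTC.congr_of_eventuallyEq (Filter.Eventually.of_forall (fun u => hψint u))
    have hVψ : ∀ t : ℝ, V (ψ t) = c := by
      intro t
      have h1 : Tendsto (fun k : ℕ => V (φ ((k:ℝ) + t))) (U : Filter ℕ) (𝓝 (V (ψ t))) :=
        (hV.continuous.tendsto _).comp (hψlim t)
      have h3 : Tendsto (fun k : ℕ => (k:ℝ) + t) atTop atTop :=
        tendsto_atTop_add_const_right _ t (tendsto_natCast_atTop_atTop (R := ℝ))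
      have h2 : Tendsto (fun k : ℕ => V (φ ((k:ℝ) + t))) (U : Filter ℕ) (𝓝 c) :=
        (hglim.comp h3).mono_left hU
      exact tendsto_nhds_unique h1 h2
    set F : (Fin n → ℝ) → ℝ := fun x => α ‖h x‖ with hFdef
    have hFc : Continuous F := hαc.comp hh.norm
    have hFnn : ∀ x, 0 ≤ F x := fun x => hαnn _ (norm_nonneg _)
    have hφmax : Continuous (fun s : ℝ => φ (max s 0)) := by
      apply ContinuousOn.comp_continuous (s := Set.Ici (0:ℝ))
        (fun x hx => (hφcont x hx).continuousWithinAt)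
        (continuous_id.max continuous_const)
      intro s
      exact le_max_right s 0
    set ρ : ℝ → ℝ := fun s => F (φ (max s 0)) with hρdef
    have hρc : Continuous ρ := hFc.comp hφmax
    have hρnn : ∀ s, 0 ≤ ρ s := fun s => hFnn _
    set A : ℝ → ℝ := fun t => ∫ s in (0:ℝ)..t, ρ s with hAdef
    have hAadj : ∀ s t : ℝ, A s + ∫ x in s..t, ρ x = A t := fun s t =>
      intervalIntegral.integral_add_adjacent_intervals (hρc.intervalIntegrable _ _)
        (hρc.intervalIntegrable _ _)
    have hAmono : Monotone A := by
      intro s t hst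
      have h2 : 0 ≤ ∫ x in s..t, ρ x :=
        intervalIntegral.integral_nonneg hst (fun x _ => hρnn x)
      linarith [hAadj s t]
    have hAbound : ∀ t, A t ≤ g 0 := by
      intro t
      rcases le_or_gt t 0 with ht | ht
      · calc A t ≤ A 0 := hAmono ht
        _ = 0 := by simp [hAdef]
        _ ≤ g 0 := hVnn _
      · have hkey := dini_le_integral (g := g) (w := fun s => -ρ s) ht.le
          (fun x hx => (hV.continuous.continuousAt.comp
            (hφcont x hx.1)).continuousWithinAt) hρc.neg
          (fun x hx => by
            have h5 := hdini φ hsol x hx.1 (hzero x hx.1)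
            have h6 : α ‖h (φ x)‖ = ρ x := by
              simp only [hρdef, hFdef, max_eq_left hx.1]
            show diniDeriv g x ≤ -ρ x
            rw [← h6]
            exact h5)
          (fun x hx => quot_bound hV (hsol x hx.1))
        have h7 : (∫ s in (0:ℝ)..t, -ρ s) = -A t := by
          simp [hAdef, intervalIntegral.integral_neg]
        rw [h7] at hkey
        have h8 := hVnn (φ t)
        have h9 : g t = V (φ t) := rfl
        linarith
    have hAbdd : BddAbove (Set.range A) := by
      refine ⟨g 0, ?_⟩
      rintro y ⟨t, rfl⟩
      exact hAbound t
    have hAlim : Tendsto A atTop (𝓝 (⨆ t, A t)) := tendsto_atTop_ciSup hAmono hAbdd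
    have hAtail : ∀ T : ℝ, Tendsto (fun k : ℕ => A ((k:ℝ) + T) - A (k:ℝ)) atTop (𝓝 0) := by
      intro T
      have h1 : Tendsto (fun k : ℕ => A ((k:ℝ) + T)) atTop (𝓝 (⨆ t, A t)) :=
        hAlim.comp (tendsto_atTop_add_const_right _ T (tendsto_natCast_atTop_atTop (R := ℝ)))
      have h2 : Tendsto (fun k : ℕ => A ((k:ℝ))) atTop (𝓝 (⨆ t, A t)) :=
        hAlim.comp (tendsto_natCast_atTop_atTop (R := ℝ))
      simpa using h1.sub h2
    have hintzero : ∀ T : ℝ, 0 ≤ T → (∫ s in (0:ℝ)..T, F (ψ s)) = 0 := by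
      intro T hT
      have hseq : ∀ᶠ k : ℕ in (U : Filter ℕ),
          (∫ s in (0:ℝ)..T, F (φ ((k:ℝ) + s))) = A ((k:ℝ) + T) - A (k:ℝ) := by
        apply Filter.Eventually.of_forall
        intro k
        have h1 : ∀ s ∈ Set.uIcc (0:ℝ) T, F (φ ((k:ℝ) + s)) = ρ ((k:ℝ) + s) := by
          intro s hs
          rw [Set.uIcc_of_le hT] at hs
          have h2 : max ((k:ℝ) + s) 0 = (k:ℝ) + s := by
            have h0 : (0:ℝ) ≤ (k:ℝ) := Nat.cast_nonneg k
            have := hs.1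
            exact max_eq_left (by linarith)
          simp only [hρdef, h2]
        have h2 : (∫ s in (0:ℝ)..T, F (φ ((k:ℝ) + s))) = ∫ s in (0:ℝ)..T, ρ ((k:ℝ) + s) :=
          intervalIntegral.integral_congr h1
        rw [h2, intervalIntegral.integral_comp_add_left ρ ((k:ℝ))]
        have h3 := hAadj ((k:ℝ)) ((k:ℝ) + T)
        have h4 : (k:ℝ) + 0 = (k:ℝ) := by ring
        rw [h4]
        linarith
      have hlim1 : Tendsto (fun k : ℕ => ∫ s in (0:ℝ)..T, F (φ ((k:ℝ) + s))) (U : Filter ℕ)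
          (𝓝 (∫ s in (0:ℝ)..T, F (ψ s))) := by
        apply tendsto_integral_comp (R := R) hFc
        · apply hUev
          filter_upwards [(tendsto_natCast_atTop_atTop (R := ℝ)).eventually_ge_atTop |T|]
            with k hk t htu
          have h1 : -|T| ≤ t := by
            rcases Set.mem_uIcc.mp htu with hh | hh
            · linarith [hh.1, neg_abs_le T, abs_nonneg T]
            · linarith [hh.1, neg_abs_le T]
          exact hφR _ (by linarith)
        · exact fun t _ => hψR t
        · exact hψcont
        · apply hUev
          filter_upwards [(tendsto_natCast_atTop_atTop (R := ℝ)).eventually_ge_atTop |T|]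
            with k hk
          exact hφkcont k T hk
        · intro ε hε
          filter_upwards [key (|T| + 1) ε hε] with k hk t ht
          apply hk
          constructor
          · rcases Set.mem_uIcc.mp ht with hh | hh
            · linarith [hh.1, neg_abs_le T, abs_nonneg T]
            · linarith [hh.1, neg_abs_le T]
          · rcases Set.mem_uIcc.mp ht with hh | hh
            · linarith [hh.2, le_abs_self T, abs_nonneg T]
            · linarith [hh.2, le_abs_self T, abs_nonneg T]
      have hlim2 : Tendsto (fun k : ℕ => ∫ s in (0:ℝ)..T, F (φ ((k:ℝ) + s))) (U : Filter ℕ)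
          (𝓝 0) := by
        refine (((hAtail T).mono_left hU).congr' ?_)
        filter_upwards [hseq] with k hk
        exact hk.symm
      exact tendsto_nhds_unique hlim1 hlim2
    have hFψc : Continuous fun s => F (ψ s) := hFc.comp hψcont
    have hFψpos : ∀ t : ℝ, 0 < t → F (ψ t) = 0 := by
      intro t ht
      have hFTC : HasDerivAt (fun u => ∫ s in (0:ℝ)..u, F (ψ s)) (F (ψ t)) t :=
        intervalIntegral.integral_hasDerivAt_right (hFψc.intervalIntegrable _ _)
          (hFψc.stronglyMeasurableAtFilter _ _) hFψc.continuousAt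
      have hzero' : HasDerivAt (fun u => ∫ s in (0:ℝ)..u, F (ψ s)) 0 t := by
        apply (hasDerivAt_const t (0:ℝ)).congr_of_eventuallyEq
        have h1 : ∀ᶠ u in 𝓝 t, 0 < u := (isOpen_Ioi (a := (0:ℝ))).eventually_mem ht
        filter_upwards [h1] with u hu
        exact hintzero u hu.le
      exact hFTC.unique hzero'
    have hFψ : ∀ t : ℝ, 0 ≤ t → F (ψ t) = 0 := by
      intro t ht
      rcases eq_or_lt_of_le ht with heq | hlt
      · have h1 : Tendsto (fun s => F (ψ s)) (𝓝[>] (0:ℝ)) (𝓝 (F (ψ 0))) :=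
          hFψc.continuousAt.mono_left nhdsWithin_le_nhds
        have h2 : Tendsto (fun s => F (ψ s)) (𝓝[>] (0:ℝ)) (𝓝 0) := by
          apply Tendsto.congr' _ tendsto_const_nhds
          filter_upwards [self_mem_nhdsWithin] with s hs
          exact (hFψpos s hs).symm
        rw [← heq]
        exact tendsto_nhds_unique h1 h2
      · exact hFψpos t hlt
    have hhψ : ∀ t : ℝ, t ≥ 0 → h (ψ t) = 0 := by
      intro t ht
      have h1 := hFψ t ht
      by_contra hne
      have h2 : 0 < ‖h (ψ t)‖ := norm_pos_iff.mpr hne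
      have h3 : α 0 < α ‖h (ψ t)‖ :=
        hαm (Set.mem_Ici.mpr le_rfl) (Set.mem_Ici.mpr (norm_nonneg _)) h2
      rw [hα0] at h3
      simp only [hFdef] at h1
      linarith
    have hψtend := hzsd ψ hψsol hhψ
    have hc_eq : c = 0 := by
      have h1 : Tendsto (fun t => V (ψ t)) atTop (𝓝 (V 0)) :=
        (hV.continuous.tendsto 0).comp hψtend
      have h2 : Tendsto (fun t => V (ψ t)) atTop (𝓝 c) := by
        apply Tendsto.congr (fun t => (hVψ t).symm) tendsto_const_nhds
      have h3 := tendsto_nhds_unique h2 h1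
      rw [hV0] at h3
      exact h3
    rw [NormedAddCommGroup.tendsto_nhds_zero]
    intro ε hε
    have hαlε : 0 < αl ε := by
      rw [← hαl0]
      exact hαlm (Set.mem_Ici.mpr le_rfl) (Set.mem_Ici.mpr hε.le) hε
    have h1 : ∀ᶠ t in atTop, g t < αl ε := by
      rw [hc_eq] at hglim
      exact hglim.eventually_lt_const hαlε
    filter_upwards [h1, eventually_ge_atTop (0:ℝ)] with t ht1 ht2
    have h2 := (hbound (φ t)).1
    have h3 : g t = V (φ t) := rfl
    exact hαlstrict _ _ (norm_nonneg _) hε.le (by linarith)
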